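/- Let n ≥ 2 be an integer and define c₁(κ) := ⟨cos θ⟩_{M_κ}. Then, as κ → 0, c₁(κ) − κ/n + κ³/(n²(n+2)) = O(κ⁵). -/

import Mathlib

open MeasureTheory Real Filter Asymptotics

/-- The order parameter `c₁(κ) = ⟨cos θ⟩_{M_κ}`. -/
noncomputable def orderParam (n : ℕ) (κ : ℝ) : ℝ :=
  (∫ θ in Set.Ioo 0 π, Real.cos θ * Real.exp (κ * Real.cos θ) * Real.sin θ ^ (n - 2)) /
  (∫ θ in Set.Ioo 0 π, Real.exp (κ * Real.cos θ) * Real.sin θ ^ (n - 2))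

lemma aux_ioo (f : ℝ → ℝ) : (∫ θ in Set.Ioo 0 π, f θ) = ∫ x in (0:ℝ)..π, f x := by
  rw [intervalIntegral.integral_of_le Real.pi_pos.le,
    MeasureTheory.integral_Ioc_eq_integral_Ioo]

lemma aux_cos_sin (m : ℕ) : (∫ x in (0:ℝ)..π, cos x * sin x ^ m) = 0 := by
  have h : ∀ x ∈ Set.uIcc (0:ℝ) π,
      HasDerivAt (fun y => sin y ^ (m+1) / ((m:ℝ)+1)) (cos x * sin x ^ m) x := by
    intro x _
    have h1 := ((Real.hasDerivAt_sin x).pow (m+1)).div_const ((m:ℝ)+1)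
    refine h1.congr_deriv ?_
    have : ((m:ℝ)+1) ≠ 0 := by positivity
    rw [Nat.add_sub_cancel]; push_cast; rw [div_eq_iff this]
    ring
  rw [intervalIntegral.integral_eq_sub_of_hasDerivAt h
    ((by fun_prop : Continuous fun x : ℝ => cos x * sin x ^ m).intervalIntegrable _ _)]
  simp [Real.sin_pi]

lemma aux_sin_rec (p : ℕ) : (∫ x in (0:ℝ)..π, sin x ^ (p+2))
    = ((p:ℝ)+1)/((p:ℝ)+2) * ∫ x in (0:ℝ)..π, sin x ^ p := by
  rw [integral_sin_pow]
  simp [Real.sin_pi]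

lemma aux_M1 (p : ℕ) : (∫ x in (0:ℝ)..π, cos x ^ 1 * sin x ^ p) = 0 := by
  simpa using aux_cos_sin p

lemma aux_M3 (p : ℕ) : (∫ x in (0:ℝ)..π, cos x ^ 3 * sin x ^ p) = 0 := by
  have h : ∀ x : ℝ, cos x ^ 3 * sin x ^ p
      = cos x * sin x ^ p - cos x * sin x ^ (p+2) := by
    intro x
    have h1 : cos x ^ 2 = 1 - sin x ^ 2 := Real.cos_sq' x
    have h2 : cos x ^ 3 = cos x * cos x ^ 2 := by ring
    rw [h2, h1]
    ring
  simp only [h]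
  rw [intervalIntegral.integral_sub
    ((by fun_prop : Continuous fun x : ℝ => cos x * sin x ^ p).intervalIntegrable _ _)
    ((by fun_prop : Continuous fun x : ℝ => cos x * sin x ^ (p+2)).intervalIntegrable _ _),
    aux_cos_sin, aux_cos_sin]
  ring

lemma aux_M5 (p : ℕ) : (∫ x in (0:ℝ)..π, cos x ^ 5 * sin x ^ p) = 0 := by
  have h : ∀ x : ℝ, cos x ^ 5 * sin x ^ p
      = (cos x * sin x ^ p - 2 * (cos x * sin x ^ (p+2))) + cos x * sin x ^ (p+4) := by
    intro x
    have h1 : cos x ^ 2 = 1 - sin x ^ 2 := Real.cos_sq' x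
    have h2 : cos x ^ 5 = cos x * (cos x ^ 2) ^ 2 := by ring
    rw [h2, h1]
    ring
  simp only [h]
  rw [intervalIntegral.integral_add
      (IntervalIntegrable.sub
        ((by fun_prop : Continuous fun x : ℝ => cos x * sin x ^ p).intervalIntegrable _ _)
        ((by fun_prop : Continuous fun x : ℝ =>
            2 * (cos x * sin x ^ (p+2))).intervalIntegrable _ _))
      ((by fun_prop : Continuous fun x : ℝ => cos x * sin x ^ (p+4)).intervalIntegrable _ _),
    intervalIntegral.integral_sub
      ((by fun_prop : Continuous fun x : ℝ => cos x * sin x ^ p).intervalIntegrable _ _)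
      ((by fun_prop : Continuous fun x : ℝ =>
          2 * (cos x * sin x ^ (p+2))).intervalIntegrable _ _),
    intervalIntegral.integral_const_mul, aux_cos_sin, aux_cos_sin, aux_cos_sin]
  ring

lemma aux_M2 (p : ℕ) : (∫ x in (0:ℝ)..π, cos x ^ 2 * sin x ^ p)
    = (∫ x in (0:ℝ)..π, sin x ^ p) / ((p:ℝ)+2) := by
  have h : ∀ x : ℝ, cos x ^ 2 * sin x ^ p = sin x ^ p - sin x ^ (p+2) := by
    intro x
    have h1 : cos x ^ 2 = 1 - sin x ^ 2 := Real.cos_sq' x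
    rw [h1]; ring
  simp only [h]
  rw [intervalIntegral.integral_sub
    ((by fun_prop : Continuous fun x : ℝ => sin x ^ p).intervalIntegrable _ _)
    ((by fun_prop : Continuous fun x : ℝ => sin x ^ (p+2)).intervalIntegrable _ _),
    aux_sin_rec]
  have : ((p:ℝ)+2) ≠ 0 := by positivity
  field_simp
  ring

lemma aux_M4 (p : ℕ) : (∫ x in (0:ℝ)..π, cos x ^ 4 * sin x ^ p)
    = 3 * (∫ x in (0:ℝ)..π, sin x ^ p) / (((p:ℝ)+2) * ((p:ℝ)+4)) := by
  have h : ∀ x : ℝ, cos x ^ 4 * sin x ^ p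
      = (sin x ^ p - 2 * sin x ^ (p+2)) + sin x ^ (p+4) := by
    intro x
    have h1 : cos x ^ 2 = 1 - sin x ^ 2 := Real.cos_sq' x
    have h2 : cos x ^ 4 = (cos x ^ 2) ^ 2 := by ring
    rw [h2, h1]; ring
  simp only [h]
  rw [intervalIntegral.integral_add
      (IntervalIntegrable.sub
        ((by fun_prop : Continuous fun x : ℝ => sin x ^ p).intervalIntegrable _ _)
        ((by fun_prop : Continuous fun x : ℝ => 2 * sin x ^ (p+2)).intervalIntegrable _ _))
      ((by fun_prop : Continuous fun x : ℝ => sin x ^ (p+4)).intervalIntegrable _ _),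
    intervalIntegral.integral_sub
      ((by fun_prop : Continuous fun x : ℝ => sin x ^ p).intervalIntegrable _ _)
      ((by fun_prop : Continuous fun x : ℝ => 2 * sin x ^ (p+2)).intervalIntegrable _ _),
    intervalIntegral.integral_const_mul]
  have h4 : (∫ x in (0:ℝ)..π, sin x ^ (p+4))
      = ((p:ℝ)+3)/((p:ℝ)+4) * (((p:ℝ)+1)/((p:ℝ)+2) * ∫ x in (0:ℝ)..π, sin x ^ p) := by
    have := aux_sin_rec (p+2)
    push_cast at this
    rw [show p + 4 = (p + 2) + 2 from rfl, this, aux_sin_rec]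
    ring_nf
  rw [h4, aux_sin_rec]
  have h2 : ((p:ℝ)+2) ≠ 0 := by positivity
  have h3 : ((p:ℝ)+4) ≠ 0 := by positivity
  field_simp
  ring

lemma aux_swap (p j : ℕ) (κ : ℝ) :
    (∫ x in (0:ℝ)..π, cos x ^ j *
        (∑ i ∈ Finset.range 5, (κ * cos x) ^ i / (i.factorial : ℝ)) * sin x ^ p)
      = ∑ i ∈ Finset.range 5, κ ^ i / (i.factorial : ℝ)
          * ∫ x in (0:ℝ)..π, cos x ^ (i+j) * sin x ^ p := by
  have h : ∀ x : ℝ, cos x ^ j *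
        (∑ i ∈ Finset.range 5, (κ * cos x) ^ i / (i.factorial : ℝ)) * sin x ^ p
      = ∑ i ∈ Finset.range 5, κ ^ i / (i.factorial : ℝ) * (cos x ^ (i+j) * sin x ^ p) := by
    intro x
    rw [Finset.mul_sum, Finset.sum_mul]
    refine Finset.sum_congr rfl fun i _ => ?_
    rw [mul_pow]
    ring
  simp only [h]
  rw [intervalIntegral.integral_finset_sum]
  · exact Finset.sum_congr rfl fun i _ => intervalIntegral.integral_const_mul _ _
  · intro i _
    exact (by fun_prop :
      Continuous fun x : ℝ => κ ^ i / (i.factorial : ℝ) * (cos x ^ (i+j) * sin x ^ p)).intervalIntegrable _ _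

lemma aux_rem (p j : ℕ) (κ : ℝ) (hκ : |κ| ≤ 1) :
    |(∫ x in (0:ℝ)..π, cos x ^ j * exp (κ * cos x) * sin x ^ p)
      - ∫ x in (0:ℝ)..π, cos x ^ j *
          (∑ i ∈ Finset.range 5, (κ * cos x) ^ i / (i.factorial : ℝ)) * sin x ^ p|
    ≤ |κ| ^ 5 / 100 * ∫ x in (0:ℝ)..π, sin x ^ p := by
  have hint1 : IntervalIntegrable (fun x : ℝ => cos x ^ j * exp (κ * cos x) * sin x ^ p)
      volume 0 π := (by fun_prop : Continuous fun x : ℝ =>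
        cos x ^ j * exp (κ * cos x) * sin x ^ p).intervalIntegrable _ _
  have hint2 : IntervalIntegrable (fun x : ℝ => cos x ^ j *
      (∑ i ∈ Finset.range 5, (κ * cos x) ^ i / (i.factorial : ℝ)) * sin x ^ p)
      volume 0 π := (by fun_prop : Continuous fun x : ℝ => cos x ^ j *
        (∑ i ∈ Finset.range 5, (κ * cos x) ^ i / (i.factorial : ℝ)) * sin x ^ p).intervalIntegrable _ _
  rw [← intervalIntegral.integral_sub hint1 hint2]
  have key : ‖∫ x in (0:ℝ)..π, (cos x ^ j * exp (κ * cos x) * sin x ^ p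
      - cos x ^ j * (∑ i ∈ Finset.range 5, (κ * cos x) ^ i / (i.factorial : ℝ)) * sin x ^ p)‖
      ≤ |∫ x in (0:ℝ)..π, |κ| ^ 5 / 100 * sin x ^ p| := by
    apply intervalIntegral.norm_integral_le_abs_of_norm_le
    · rw [Set.uIoc_of_le Real.pi_pos.le]
      refine (ae_restrict_iff' measurableSet_Ioc).2 (Filter.Eventually.of_forall ?_)
      intro t ht
      have hsin : 0 ≤ sin t := Real.sin_nonneg_of_nonneg_of_le_pi ht.1.le ht.2
      have h1 : |cos t| ≤ 1 := Real.abs_cos_le_one t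
      have h2 : |κ * cos t| ≤ 1 := by
        rw [abs_mul]
        exact mul_le_one₀ hκ (abs_nonneg _) h1
      have h3 := Real.exp_bound h2 (by norm_num : 0 < 5)
      have h4 : |κ * cos t| ^ 5 ≤ |κ| ^ 5 := by
        rw [abs_mul]
        exact pow_le_pow_left₀ (by positivity)
          (mul_le_of_le_one_right (abs_nonneg _) h1) 5
      norm_num [Nat.factorial] at h3
      have h6 : |exp (κ * cos t)
          - ∑ i ∈ Finset.range 5, (κ * cos t) ^ i / (i.factorial : ℝ)|
          ≤ |κ| ^ 5 / 100 := by
        nlinarith [h3, h4, (show (|κ| * |cos t|) ^ 5 ≤ |κ| ^ 5 by rw [← abs_mul]; exact h4), abs_nonneg (exp (κ * cos t)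
          - ∑ i ∈ Finset.range 5, (κ * cos t) ^ i / (i.factorial : ℝ))]
      have heq : cos t ^ j * exp (κ * cos t) * sin t ^ p
          - cos t ^ j * (∑ i ∈ Finset.range 5, (κ * cos t) ^ i / (i.factorial : ℝ)) * sin t ^ p
          = cos t ^ j * (exp (κ * cos t)
            - ∑ i ∈ Finset.range 5, (κ * cos t) ^ i / (i.factorial : ℝ)) * sin t ^ p := by
        ring
      rw [Real.norm_eq_abs, heq, abs_mul, abs_mul, abs_pow, abs_pow,
        abs_of_nonneg hsin]
      have hc : |cos t| ^ j ≤ 1 := pow_le_one₀ (abs_nonneg _) h1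
      have hsp : (0:ℝ) ≤ sin t ^ p := by positivity
      calc |cos t| ^ j * |exp (κ * cos t)
            - ∑ i ∈ Finset.range 5, (κ * cos t) ^ i / (i.factorial : ℝ)| * sin t ^ p
          ≤ 1 * (|κ| ^ 5 / 100) * sin t ^ p := by
            apply mul_le_mul_of_nonneg_right _ hsp
            apply mul_le_mul hc h6 (abs_nonneg _) one_pos.le
        _ = |κ| ^ 5 / 100 * sin t ^ p := by ring
    · exact (by fun_prop :
        Continuous fun x : ℝ => |κ| ^ 5 / 100 * sin x ^ p).intervalIntegrable _ _
  rw [Real.norm_eq_abs] at key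
  refine key.trans ?_
  rw [intervalIntegral.integral_const_mul]
  have hs : 0 < ∫ x in (0:ℝ)..π, sin x ^ p := integral_sin_pow_pos p
  rw [abs_of_nonneg (by positivity)]

set_option maxHeartbeats 1000000 in
/-- Expansion of `c₁` near `κ = 0`:  `c₁(κ) = κ/n − κ³/(n²(n+2)) + O(κ⁵)`. -/
theorem orderParam_expansion_zero (n : ℕ) (hn : 2 ≤ n) :
    (fun κ : ℝ => orderParam n κ - κ / n + κ ^ 3 / ((n : ℝ) ^ 2 * ((n : ℝ) + 2)))
      =O[nhds 0] fun κ : ℝ => κ ^ 5 := by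
  obtain ⟨p, rfl⟩ : ∃ p, n = p + 2 := ⟨n - 2, by omega⟩
  set s : ℝ := ∫ x in (0:ℝ)..π, sin x ^ p with hs_def
  have hs : 0 < s := by rw [hs_def]; exact integral_sin_pow_pos p
  set nr : ℝ := (p:ℝ) + 2 with hnr_def
  have hnr : (2:ℝ) ≤ nr := by
    rw [hnr_def]
    have : (0:ℝ) ≤ (p:ℝ) := Nat.cast_nonneg p
    linarith
  have hnr0 : (0:ℝ) < nr := by linarith
  have hnr20 : (0:ℝ) < nr + 2 := by linarith
  set a : ℝ := s / nr with ha_def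
  set b : ℝ := 3 * s / (nr * (nr + 2)) with hb_def
  have ha0 : 0 < a := by positivity
  have hb0 : 0 < b := by positivity
  set c : ℝ := nr ^ 2 * (nr + 2) with hc_def
  have hc0 : (0:ℝ) < c := by positivity
  have hc16 : (16:ℝ) ≤ c := by
    rw [hc_def]; nlinarith [hnr, hnr0]
  clear_value s nr a b c
  -- series values
  have hNP : ∀ κ : ℝ, (∫ x in (0:ℝ)..π, cos x ^ 1 *
      (∑ i ∈ Finset.range 5, (κ * cos x) ^ i / (i.factorial : ℝ)) * sin x ^ p)
      = κ * a + κ ^ 3 / 6 * b := by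
    intro κ
    rw [aux_swap]
    rw [Finset.sum_range_succ, Finset.sum_range_succ, Finset.sum_range_succ,
      Finset.sum_range_succ, Finset.sum_range_succ, Finset.sum_range_zero]
    have hp2 : ((p:ℝ) + 2) ≠ 0 := by positivity
    have hp4 : ((p:ℝ) + 4) ≠ 0 := by positivity
    norm_num [Nat.factorial]
    rw [aux_cos_sin p, aux_M2 p, aux_M3 p, aux_M4 p, aux_M5 p, ha_def, hb_def, hs_def, hnr_def]
    field_simp
    ring
  have hDP : ∀ κ : ℝ, (∫ x in (0:ℝ)..π, cos x ^ 0 *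
      (∑ i ∈ Finset.range 5, (κ * cos x) ^ i / (i.factorial : ℝ)) * sin x ^ p)
      = s + κ ^ 2 / 2 * a + κ ^ 4 / 24 * b := by
    intro κ
    rw [aux_swap]
    rw [Finset.sum_range_succ, Finset.sum_range_succ, Finset.sum_range_succ,
      Finset.sum_range_succ, Finset.sum_range_succ, Finset.sum_range_zero]
    have hp2 : ((p:ℝ) + 2) ≠ 0 := by positivity
    have hp4 : ((p:ℝ) + 4) ≠ 0 := by positivity
    norm_num [Nat.factorial]
    rw [aux_cos_sin p, aux_M2 p, aux_M3 p, aux_M4 p, ha_def, hb_def, hs_def, hnr_def]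
    field_simp
    ring
  rw [isBigO_iff]
  refine ⟨8, ?_⟩
  filter_upwards [Metric.ball_mem_nhds (0:ℝ) one_pos] with κ hκball
  have hκ : |κ| ≤ 1 := by
    rw [Metric.mem_ball, Real.dist_eq, sub_zero] at hκball
    exact hκball.le
  have hκ5 : |κ| ^ 5 ≤ 1 := pow_le_one₀ (abs_nonneg _) hκ
  set Nκ : ℝ := ∫ x in (0:ℝ)..π, cos x * exp (κ * cos x) * sin x ^ p with hN_def
  set Dκ : ℝ := ∫ x in (0:ℝ)..π, exp (κ * cos x) * sin x ^ p with hD_def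
  set P : ℝ := κ / nr - κ ^ 3 / c with hP_def
  clear_value Nκ Dκ P
  -- remainder bounds
  have hremN : |Nκ - (κ * a + κ ^ 3 / 6 * b)| ≤ |κ| ^ 5 / 100 * s := by
    have h := aux_rem p 1 κ hκ
    rw [hNP κ] at h
    simp only [pow_one] at h
    rw [← hs_def] at h
    rw [hN_def]
    exact h
  have hremD : |Dκ - (s + κ ^ 2 / 2 * a + κ ^ 4 / 24 * b)| ≤ |κ| ^ 5 / 100 * s := by
    have h := aux_rem p 0 κ hκ
    rw [hDP κ] at h
    simp only [pow_zero, one_mul] at h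
    rw [← hs_def] at h
    rw [hD_def]
    exact h
  -- lower bound on Dκ
  have hκ2 : κ ^ 2 ≤ 1 := by
    rw [← sq_abs]
    exact pow_le_one₀ (abs_nonneg _) hκ
  have hDlow : s / 2 ≤ Dκ := by
    have h1 := (abs_le.1 hremD).1
    have h2 : |κ| ^ 5 / 100 * s ≤ s / 100 := by nlinarith
    have h3 : 0 ≤ κ ^ 2 / 2 * a := by positivity
    have h4 : 0 ≤ κ ^ 4 / 24 * b := by positivity
    linarith
  have hD0 : (0:ℝ) < Dκ := lt_of_lt_of_le (by positivity) hDlow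
  -- polynomial identity
  have hid : (κ * a + κ ^ 3 / 6 * b) - (s + κ ^ 2 / 2 * a + κ ^ 4 / 24 * b) * P
      = κ ^ 5 * (a / (2 * c) - b / (24 * nr) + κ ^ 2 * (b / (24 * c))) := by
    rw [hP_def, ha_def, hb_def, hc_def]
    field_simp
    ring
  -- coefficient bound
  have hbs : b ≤ s := by
    rw [hb_def, div_le_iff₀ (by positivity)]
    nlinarith [hs, hnr, hnr0]
  have hcoef : |a / (2 * c) - b / (24 * nr) + κ ^ 2 * (b / (24 * c))| ≤ 3 * s := by
    have t1a : (0:ℝ) ≤ a / (2 * c) := by positivity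
    have t1b : a / (2 * c) ≤ s := by
      have ha_s : a ≤ s := by
        rw [ha_def]
        exact div_le_self hs.le (by linarith)
      exact (div_le_self ha0.le (by linarith)).trans ha_s
    have t2a : (0:ℝ) ≤ b / (24 * nr) := by positivity
    have t2b : b / (24 * nr) ≤ s := (div_le_self hb0.le (by linarith)).trans hbs
    have t3a : (0:ℝ) ≤ κ ^ 2 * (b / (24 * c)) := by positivity
    have t3b : κ ^ 2 * (b / (24 * c)) ≤ s := by
      have hq : b / (24 * c) ≤ s := (div_le_self hb0.le (by linarith)).trans hbs
      have hq0 : (0:ℝ) ≤ b / (24 * c) := by positivity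
      calc κ ^ 2 * (b / (24 * c)) ≤ 1 * (b / (24 * c)) :=
            mul_le_mul_of_nonneg_right hκ2 hq0
        _ = b / (24 * c) := one_mul _
        _ ≤ s := hq
    rw [abs_le]
    constructor <;> linarith
  -- |P| ≤ 1
  have hPabs : |P| ≤ 1 := by
    have h1 : |κ / nr| ≤ 1 / 2 := by
      rw [abs_div, abs_of_pos hnr0, div_le_div_iff₀ hnr0 two_pos]
      nlinarith [abs_nonneg κ]
    have h2 : |κ ^ 3 / c| ≤ 1 / 2 := by
      rw [abs_div, abs_of_pos hc0, div_le_div_iff₀ hc0 two_pos]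
      have h3 : |κ ^ 3| ≤ 1 := by
        rw [abs_pow]
        exact pow_le_one₀ (abs_nonneg _) hκ
      nlinarith [abs_nonneg (κ ^ 3)]
    have htri : |κ / nr - κ ^ 3 / c| ≤ |κ / nr| + |κ ^ 3 / c| := by
      have := abs_add_le (κ / nr) (-(κ ^ 3 / c))
      rwa [← sub_eq_add_neg, abs_neg] at this
    rw [hP_def]
    linarith
  -- numerator bound
  have hnum : |Nκ - Dκ * P| ≤ 4 * s * |κ| ^ 5 := by
    have hdecomp : Nκ - Dκ * P
        = ((κ * a + κ ^ 3 / 6 * b) - (s + κ ^ 2 / 2 * a + κ ^ 4 / 24 * b) * P)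
          + ((Nκ - (κ * a + κ ^ 3 / 6 * b))
            - (Dκ - (s + κ ^ 2 / 2 * a + κ ^ 4 / 24 * b)) * P) := by ring
    have h1 : |(κ * a + κ ^ 3 / 6 * b) - (s + κ ^ 2 / 2 * a + κ ^ 4 / 24 * b) * P|
        ≤ 3 * s * |κ| ^ 5 := by
      rw [hid, abs_mul, abs_pow]
      calc |κ| ^ 5 * |a / (2 * c) - b / (24 * nr) + κ ^ 2 * (b / (24 * c))|
          ≤ |κ| ^ 5 * (3 * s) := mul_le_mul_of_nonneg_left hcoef (by positivity)
        _ = 3 * s * |κ| ^ 5 := by ring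
    have h2 : |(Dκ - (s + κ ^ 2 / 2 * a + κ ^ 4 / 24 * b)) * P| ≤ |κ| ^ 5 / 100 * s := by
      rw [abs_mul]
      calc |Dκ - (s + κ ^ 2 / 2 * a + κ ^ 4 / 24 * b)| * |P|
          ≤ (|κ| ^ 5 / 100 * s) * 1 :=
            mul_le_mul hremD hPabs (abs_nonneg _) (by positivity)
        _ = |κ| ^ 5 / 100 * s := mul_one _
    have h3 : |(Nκ - (κ * a + κ ^ 3 / 6 * b))
          - (Dκ - (s + κ ^ 2 / 2 * a + κ ^ 4 / 24 * b)) * P|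
        ≤ |κ| ^ 5 / 100 * s + |κ| ^ 5 / 100 * s := by
      have := abs_add_le (Nκ - (κ * a + κ ^ 3 / 6 * b))
        (-((Dκ - (s + κ ^ 2 / 2 * a + κ ^ 4 / 24 * b)) * P))
      rw [← sub_eq_add_neg, abs_neg] at this
      linarith
    have h4 := abs_add_le
      ((κ * a + κ ^ 3 / 6 * b) - (s + κ ^ 2 / 2 * a + κ ^ 4 / 24 * b) * P)
      ((Nκ - (κ * a + κ ^ 3 / 6 * b))
        - (Dκ - (s + κ ^ 2 / 2 * a + κ ^ 4 / 24 * b)) * P)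
    rw [← hdecomp] at h4
    nlinarith [pow_nonneg (abs_nonneg κ) 5]
  -- rewrite orderParam
  have hcast : (((p + 2 : ℕ)) : ℝ) = nr := by
    rw [hnr_def]; push_cast; ring
  have hop : orderParam (p + 2) κ = Nκ / Dκ := by
    simp only [orderParam]
    rw [aux_ioo, aux_ioo, hN_def, hD_def]
    norm_num
  have hexpr : orderParam (p + 2) κ - κ / ((p + 2 : ℕ) : ℝ)
      + κ ^ 3 / (((p + 2 : ℕ) : ℝ) ^ 2 * (((p + 2 : ℕ) : ℝ) + 2))
      = (Nκ - Dκ * P) / Dκ := by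
    rw [hop, hcast, hP_def, hc_def]
    field_simp
    ring
  rw [hexpr, Real.norm_eq_abs, Real.norm_eq_abs, abs_div, abs_pow]
  have hDabs : s / 2 ≤ |Dκ| := hDlow.trans (le_abs_self _)
  calc |Nκ - Dκ * P| / |Dκ| ≤ (4 * s * |κ| ^ 5) / (s / 2) :=
        div_le_div₀ (by positivity) hnum (by linarith) hDabs
    _ = 8 * |κ| ^ 5 := by
        field_simp
        ring
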